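/- arXiv:2604.08453 — 4 statements merged into one kernel-verified Lean document; each statement's English description precedes it below -/
import Mathlib

section
/- Let κ₁, κ₂ > 0 be real, let x₀ ∈ ℝ, and let θ_d, θ_n ∈ ℝ. Let N₁, N₂, W₁, W₂, W_d, W_n : ℝ → ℝ be differentiable at x₀ with W₁(x₀) = W₂(x₀) = 0, W₁'(x₀) = W₂'(x₀) = 0, W_d(x₀) = 1, W_d'(x₀) = 0, W_n(x₀) = 0, and W_n'(x₀) = 1. Define u_L := W₁·N₁ + θ_d·W_d + (θ_n/κ₁)·W_n and u_R := W₂·N₂ + θ_d·W_d + (θ_n/κ₂)·W_n. Then u_L(x₀) = u_R(x₀) = θ_d and κ₁·u_L'(x₀) = κ₂·u_R'(x₀) = θ_n; in particular the interface continuity condition u_L(x₀) − u_R(x₀) = 0 and the flux continuity condition κ₁·u_L'(x₀) − κ₂·u_R'(x₀) = 0 hold for every choice of N₁, N₂, θ_d, θ_n. -/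
/-- Interface hard-constraint theorem of the windowing approach: the windowed ansatzes
on the two subdomains meeting at `x₀` attain the common value `θ_d` and common flux
`θ_n` at the interface, hence solution continuity and flux continuity hold for every
choice of `N₁, N₂, θ_d, θ_n`. -/
theorem stmt7 (κ₁ κ₂ : ℝ) (hκ₁ : 0 < κ₁) (hκ₂ : 0 < κ₂) (x₀ θd θn : ℝ)
    (N₁ N₂ W₁ W₂ Wd Wn : ℝ → ℝ)
    (hN₁ : DifferentiableAt ℝ N₁ x₀) (hN₂ : DifferentiableAt ℝ N₂ x₀)
    (hW₁ : DifferentiableAt ℝ W₁ x₀) (hW₂ : DifferentiableAt ℝ W₂ x₀)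
    (hWd : DifferentiableAt ℝ Wd x₀) (hWn : DifferentiableAt ℝ Wn x₀)
    (hW₁0 : W₁ x₀ = 0) (hW₂0 : W₂ x₀ = 0)
    (hW₁' : deriv W₁ x₀ = 0) (hW₂' : deriv W₂ x₀ = 0)
    (hWd0 : Wd x₀ = 1) (hWd' : deriv Wd x₀ = 0)
    (hWn0 : Wn x₀ = 0) (hWn' : deriv Wn x₀ = 1)
    (uL uR : ℝ → ℝ)
    (huL : uL = fun x => W₁ x * N₁ x + θd * Wd x + (θn / κ₁) * Wn x)
    (huR : uR = fun x => W₂ x * N₂ x + θd * Wd x + (θn / κ₂) * Wn x) :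
    (uL x₀ = θd ∧ uR x₀ = θd ∧ κ₁ * deriv uL x₀ = θn ∧ κ₂ * deriv uR x₀ = θn) ∧
    uL x₀ - uR x₀ = 0 ∧ κ₁ * deriv uL x₀ - κ₂ * deriv uR x₀ = 0 := by
  have hL0 : uL x₀ = θd := by simp [huL, hW₁0, hWd0, hWn0]
  have hR0 : uR x₀ = θd := by simp [huR, hW₂0, hWd0, hWn0]
  have hL' : deriv uL x₀ = θn / κ₁ := by
    rw [huL]
    rw [deriv_fun_add (((hW₁.fun_mul hN₁).fun_add ((differentiableAt_const θd).fun_mul hWd)))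
        ((differentiableAt_const _).fun_mul hWn),
      deriv_fun_add (hW₁.fun_mul hN₁) ((differentiableAt_const θd).fun_mul hWd),
      deriv_fun_mul hW₁ hN₁, deriv_const_mul _ hWd, deriv_const_mul _ hWn]
    simp [hW₁0, hW₁', hWd', hWn']
  have hR' : deriv uR x₀ = θn / κ₂ := by
    rw [huR]
    rw [deriv_fun_add (((hW₂.fun_mul hN₂).fun_add ((differentiableAt_const θd).fun_mul hWd)))
        ((differentiableAt_const _).fun_mul hWn),
      deriv_fun_add (hW₂.fun_mul hN₂) ((differentiableAt_const θd).fun_mul hWd),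
      deriv_fun_mul hW₂ hN₂, deriv_const_mul _ hWd, deriv_const_mul _ hWn]
    simp [hW₂0, hW₂', hWd', hWn']
  have h1 : κ₁ * deriv uL x₀ = θn := by rw [hL']; field_simp
  have h2 : κ₂ * deriv uR x₀ = θn := by rw [hR']; field_simp
  refine ⟨⟨hL0, hR0, h1, h2⟩, by rw [hL0, hR0]; ring, by rw [h1, h2]; ring⟩
end

section
/- Let κ₁, κ₂ > 0 be real, let x₀ ∈ ℝ, and let θ_d, θ_n, h_d, h_n ∈ ℝ. Let N₁, N₂, W₁, W₂, W_d, W_n : ℝ → ℝ be differentiable at x₀ with W₁(x₀) = W₂(x₀) = 0, W₁'(x₀) = W₂'(x₀) = 0, W_d(x₀) = 1, W_d'(x₀) = 0, W_n(x₀) = 0, and W_n'(x₀) = 1. Define u_L := W₁·N₁ + θ_d·W_d + (θ_n/κ₁)·W_n and u_R := W₂·N₂ + (θ_d + h_d)·W_d + ((θ_n + h_n)/κ₂)·W_n. Then u_R(x₀) − u_L(x₀) = h_d and κ₂·u_R'(x₀) − κ₁·u_L'(x₀) = h_n. -/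
/-- Windowing ansatz with discontinuous interface functions: the ansatz enforces a
prescribed jump `h_d` in the solution and `h_n` in the flux `κ·u'` across the
interface, for every choice of `N₁, N₂, θ_d, θ_n`. -/
theorem stmt8 (κ₁ κ₂ : ℝ) (hκ₁ : 0 < κ₁) (hκ₂ : 0 < κ₂) (x₀ θd θn hd hn : ℝ)
    (N₁ N₂ W₁ W₂ Wd Wn : ℝ → ℝ)
    (hN₁ : DifferentiableAt ℝ N₁ x₀) (hN₂ : DifferentiableAt ℝ N₂ x₀)
    (hW₁ : DifferentiableAt ℝ W₁ x₀) (hW₂ : DifferentiableAt ℝ W₂ x₀)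
    (hWd : DifferentiableAt ℝ Wd x₀) (hWn : DifferentiableAt ℝ Wn x₀)
    (hW₁0 : W₁ x₀ = 0) (hW₂0 : W₂ x₀ = 0)
    (hW₁' : deriv W₁ x₀ = 0) (hW₂' : deriv W₂ x₀ = 0)
    (hWd0 : Wd x₀ = 1) (hWd' : deriv Wd x₀ = 0)
    (hWn0 : Wn x₀ = 0) (hWn' : deriv Wn x₀ = 1)
    (uL uR : ℝ → ℝ)
    (huL : uL = fun x => W₁ x * N₁ x + θd * Wd x + (θn / κ₁) * Wn x)
    (huR : uR = fun x => W₂ x * N₂ x + (θd + hd) * Wd x + ((θn + hn) / κ₂) * Wn x) :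
    uR x₀ - uL x₀ = hd ∧ κ₂ * deriv uR x₀ - κ₁ * deriv uL x₀ = hn := by
  subst huL huR
  constructor
  · simp [hW₁0, hW₂0, hWn0, hWd0]
  · have dL : deriv (fun x => W₁ x * N₁ x + θd * Wd x + (θn / κ₁) * Wn x) x₀
        = θn / κ₁ := by
      rw [deriv_fun_add (((hW₁.fun_mul hN₁).fun_add ((hWd.const_mul θd))))
          (hWn.const_mul _), deriv_fun_add (hW₁.fun_mul hN₁) (hWd.const_mul θd),
          deriv_fun_mul hW₁ hN₁, deriv_const_mul _ hWd, deriv_const_mul _ hWn]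
      simp [hW₁0, hW₁', hWd', hWn']
    have dR : deriv (fun x => W₂ x * N₂ x + (θd + hd) * Wd x + ((θn + hn) / κ₂) * Wn x) x₀
        = (θn + hn) / κ₂ := by
      rw [deriv_fun_add (((hW₂.fun_mul hN₂).fun_add ((hWd.const_mul (θd + hd)))))
          (hWn.const_mul _), deriv_fun_add (hW₂.fun_mul hN₂) (hWd.const_mul (θd + hd)),
          deriv_fun_mul hW₂ hN₂, deriv_const_mul _ hWd, deriv_const_mul _ hWn]
      simp [hW₂0, hW₂', hWd', hWn']
    rw [dL, dR]
    field_simp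
    ring
end

section
/- Let κ₁, κ₂ > 0, let x₀ ∈ (0,1), let N₁, N₂ : ℝ → ℝ be differentiable, and let s, v ∈ ℝ. Then there exist real polynomials g₁, g₂ of degree at most 2 satisfying g₁'(0) = s − N₁'(0), g₁(x₀) = −(N₁(x₀) − N₂(x₀))/2, κ₁·g₁'(x₀) = −(κ₁·N₁'(x₀) − κ₂·N₂'(x₀))/2, g₂(1) = v − N₂(1), g₂(x₀) = (N₁(x₀) − N₂(x₀))/2, and κ₂·g₂'(x₀) = (κ₁·N₁'(x₀) − κ₂·N₂'(x₀))/2; and for any such g₁, g₂, the functions u₁ := N₁ + g₁ and u₂ := N₂ + g₂ satisfy u₁'(0) = s, u₂(1) = v, u₁(x₀) = u₂(x₀), and κ₁·u₁'(x₀) = κ₂·u₂'(x₀). -/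
open Polynomial

/-- Buffer approach for a one-dimensional single-interface problem: quadratic buffer
polynomials `g₁, g₂` matching the network mismatch data exist, and for any such buffers
the corrected functions `u₁ = N₁ + g₁`, `u₂ = N₂ + g₂` satisfy the Neumann condition at
`0`, the Dirichlet condition at `1`, and solution and flux continuity at `x₀`. -/
theorem stmt13 (κ₁ κ₂ : ℝ) (hκ₁ : 0 < κ₁) (hκ₂ : 0 < κ₂)
    (x₀ : ℝ) (hx₀ : x₀ ∈ Set.Ioo (0 : ℝ) 1)
    (N₁ N₂ : ℝ → ℝ) (hN₁ : Differentiable ℝ N₁) (hN₂ : Differentiable ℝ N₂)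
    (s v : ℝ) :
    (∃ g₁ g₂ : ℝ[X], g₁.natDegree ≤ 2 ∧ g₂.natDegree ≤ 2 ∧
      (derivative g₁).eval 0 = s - deriv N₁ 0 ∧
      g₁.eval x₀ = -(N₁ x₀ - N₂ x₀) / 2 ∧
      κ₁ * (derivative g₁).eval x₀ = -(κ₁ * deriv N₁ x₀ - κ₂ * deriv N₂ x₀) / 2 ∧
      g₂.eval 1 = v - N₂ 1 ∧
      g₂.eval x₀ = (N₁ x₀ - N₂ x₀) / 2 ∧
      κ₂ * (derivative g₂).eval x₀ = (κ₁ * deriv N₁ x₀ - κ₂ * deriv N₂ x₀) / 2) ∧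
    ∀ g₁ g₂ : ℝ[X], g₁.natDegree ≤ 2 → g₂.natDegree ≤ 2 →
      (derivative g₁).eval 0 = s - deriv N₁ 0 →
      g₁.eval x₀ = -(N₁ x₀ - N₂ x₀) / 2 →
      κ₁ * (derivative g₁).eval x₀ = -(κ₁ * deriv N₁ x₀ - κ₂ * deriv N₂ x₀) / 2 →
      g₂.eval 1 = v - N₂ 1 →
      g₂.eval x₀ = (N₁ x₀ - N₂ x₀) / 2 →
      κ₂ * (derivative g₂).eval x₀ = (κ₁ * deriv N₁ x₀ - κ₂ * deriv N₂ x₀) / 2 →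
      deriv (fun x => N₁ x + g₁.eval x) 0 = s ∧
      (fun x => N₂ x + g₂.eval x) 1 = v ∧
      (fun x => N₁ x + g₁.eval x) x₀ = (fun x => N₂ x + g₂.eval x) x₀ ∧
      κ₁ * deriv (fun x => N₁ x + g₁.eval x) x₀ =
        κ₂ * deriv (fun x => N₂ x + g₂.eval x) x₀ := by
  obtain ⟨hx0, hx1⟩ := hx₀
  have hx0' : x₀ ≠ 0 := ne_of_gt hx0
  have h1x : (1 : ℝ) - x₀ ≠ 0 := by intro h; linarith
  
  constructor
  · -- existence
    set a : ℝ := s - deriv N₁ 0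
    set b : ℝ := -(N₁ x₀ - N₂ x₀) / 2
    set c : ℝ := -(κ₁ * deriv N₁ x₀ - κ₂ * deriv N₂ x₀) / 2 / κ₁
    set q : ℝ := (N₁ x₀ - N₂ x₀) / 2
    set r : ℝ := (κ₁ * deriv N₁ x₀ - κ₂ * deriv N₂ x₀) / 2 / κ₂
    set p : ℝ := v - N₂ 1
    set δ : ℝ := (c - a) / (2 * x₀)
    set e : ℝ := (p - q - r * (1 - x₀)) / ((1 - x₀) ^ 2)
    have hC2 : derivative ((C x₀ : ℝ[X]) ^ 2) = 0 := by
      rw [← C_pow]; exact derivative_C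
    refine ⟨C (b - a * x₀ - δ * x₀ ^ 2) + C a * X + C δ * X ^ 2,
      C q + C r * (X - C x₀) + C e * (X - C x₀) ^ 2, ?_, ?_, ?_, ?_, ?_, ?_, ?_, ?_⟩
    · compute_degree
    · compute_degree
    · simp [hC2]
    · simp [hC2]; try ring
    · have : (derivative (C (b - a * x₀ - δ * x₀ ^ 2) + C a * X + C δ * X ^ 2)).eval x₀
          = a + δ * (2 * x₀) := by simp [hC2]; (try ring); simp
      rw [this]
      have : a + δ * (2 * x₀) = c := by
        show a + (c - a) / (2 * x₀) * (2 * x₀) = c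
        rw [div_mul_cancel₀ _ (by positivity : (2:ℝ) * x₀ ≠ 0)]; ring
      rw [this]
      show κ₁ * (-(κ₁ * deriv N₁ x₀ - κ₂ * deriv N₂ x₀) / 2 / κ₁) = _
      rw [mul_comm]; exact div_mul_cancel₀ _ hκ₁.ne'
    · have : (C q + C r * (X - C x₀) + C e * (X - C x₀) ^ 2).eval 1
          = q + r * (1 - x₀) + e * (1 - x₀) ^ 2 := by simp
      rw [this]
      have : e * (1 - x₀) ^ 2 = p - q - r * (1 - x₀) := by
        show (p - q - r * (1 - x₀)) / (1 - x₀) ^ 2 * (1 - x₀) ^ 2 = p - q - r * (1 - x₀)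
        exact div_mul_cancel₀ _ (pow_ne_zero 2 h1x)
      rw [this]; ring
    · simp
    · have : (derivative (C q + C r * (X - C x₀) + C e * (X - C x₀) ^ 2)).eval x₀ = r := by
        simp [derivative_pow, hC2]
      rw [this]
      show κ₂ * ((κ₁ * deriv N₁ x₀ - κ₂ * deriv N₂ x₀) / 2 / κ₂) = _
      rw [mul_comm]; exact div_mul_cancel₀ _ hκ₂.ne'
  · intro g₁ g₂ _ _ hd0 hgx hfx hg1 hg2x hf2x
    have d1 : ∀ x, deriv (fun x => N₁ x + g₁.eval x) x = deriv N₁ x + (derivative g₁).eval x := by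
      intro x
      exact (((hN₁ x).hasDerivAt).add (g₁.hasDerivAt x)).deriv
    have d2 : ∀ x, deriv (fun x => N₂ x + g₂.eval x) x = deriv N₂ x + (derivative g₂).eval x := by
      intro x
      exact (((hN₂ x).hasDerivAt).add (g₂.hasDerivAt x)).deriv
    refine ⟨?_, ?_, ?_, ?_⟩
    · rw [d1 0, hd0]; ring
    · simp only; rw [hg1]; ring
    · simp only; rw [hgx, hg2x]; ring
    · rw [d1 x₀, d2 x₀, mul_add, mul_add, hfx, hf2x]; ring
end

section
/- Let k₁, k₂, k₃, k₄ > 0. Set K = k₁k₂k₃ + k₁k₂k₄ + k₁k₃k₄ + k₂k₃k₄, C = (7/8)k₁k₂k₃ + (5/8)k₁k₂k₄ + (3/8)k₁k₃k₄ + (1/8)k₂k₃k₄, c₃ = −(3/16)k₁k₂k₃ − (1/8)k₁k₂k₄ − (1/16)k₁k₃k₄ + (3/16)k₂²k₃ + (1/8)k₂²k₄ + (1/16)k₂k₃k₄, c₅ = −(5/16)k₁k₂k₃ − (3/16)k₁k₂k₄ + (1/8)k₁k₃² + (3/16)k₂k₃² + (3/16)k₂k₃k₄, and c₇ = −(3/8)k₁k₂k₃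 − (1/8)k₁k₂k₄ + (1/8)k₁k₃k₄ + (3/8)k₂k₃k₄. Define u₁(x) = −x²/(2k₁) + C·x/(K·k₁), u₂(x) = −x²/(2k₂) + C·x/(K·k₂) + c₃/(K·k₂), u₃(x) = −x²/(2k₃) + C·x/(K·k₃) + c₅/(K·k₃), u₄(x) = −x²/(2k₄) + C·x/(K·k₄) + c₇/(K·k₄). Then: u₁(0) = 0; u₄(1) = 0; u₁(1/4) = u₂(1/4); u₂(1/2) = u₃(1/2); u₃(3/4) = u₄(3/4); k₁·u₁'(1/4) = k₂·u₂'(1/4); k₂·u₂'(1/2) = k₃·u₃'(1/2); k₃·u₃'(3/4) = k₄·u₄'(3/4); and −kₘ·uₘ''(x) = 1 for every x ∈ ℝ and m = 1,2,3,4. -/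
lemma deriv_quad (p q r : ℝ) :
    deriv (fun x : ℝ => p * x ^ 2 + q * x + r) = fun x => 2 * p * x + q := by
  funext x
  have h : HasDerivAt (fun x : ℝ => p * x ^ 2 + q * x + r) (2 * p * x + q) x := by
    have h1 : HasDerivAt (fun x : ℝ => x ^ 2) (2 * x) x := by
      simpa using (hasDerivAt_pow 2 x)
    have := ((h1.const_mul p).add ((hasDerivAt_id x).const_mul q)).add_const r
    rw [show 2 * p * x + q = p * (2 * x) + q * 1 by ring]
    exact this
  exact h.deriv

lemma deriv2_quad (p q r : ℝ) :
    deriv (deriv (fun x : ℝ => p * x ^ 2 + q * x + r)) = fun _ => 2 * p := by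
  rw [deriv_quad]
  funext x
  have h : HasDerivAt (fun x : ℝ => 2 * p * x + q) (2 * p) x := by
    simpa using ((hasDerivAt_id x).const_mul (2 * p)).add_const q
  exact h.deriv

/-- Verification of the explicit analytic solution of the three-interface model problem
`−(κu')' = 1` on `[0,1]` with interfaces at `1/4, 1/2, 3/4`: the piecewise quadratics
with the paper's coefficients satisfy the boundary conditions, solution continuity and
flux continuity at all three interfaces, and `−kₘ·uₘ'' = 1` everywhere. -/
theorem stmt16 (k₁ k₂ k₃ k₄ : ℝ) (hk₁ : 0 < k₁) (hk₂ : 0 < k₂) (hk₃ : 0 < k₃)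
    (hk₄ : 0 < k₄) (K C c₃ c₅ c₇ : ℝ)
    (hK : K = k₁ * k₂ * k₃ + k₁ * k₂ * k₄ + k₁ * k₃ * k₄ + k₂ * k₃ * k₄)
    (hC : C = (7 / 8) * k₁ * k₂ * k₃ + (5 / 8) * k₁ * k₂ * k₄
      + (3 / 8) * k₁ * k₃ * k₄ + (1 / 8) * k₂ * k₃ * k₄)
    (hc₃ : c₃ = -(3 / 16) * k₁ * k₂ * k₃ - (1 / 8) * k₁ * k₂ * k₄
      - (1 / 16) * k₁ * k₃ * k₄ + (3 / 16) * k₂ ^ 2 * k₃ + (1 / 8) * k₂ ^ 2 * k₄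
      + (1 / 16) * k₂ * k₃ * k₄)
    (hc₅ : c₅ = -(5 / 16) * k₁ * k₂ * k₃ - (3 / 16) * k₁ * k₂ * k₄
      + (1 / 8) * k₁ * k₃ ^ 2 + (3 / 16) * k₂ * k₃ ^ 2 + (3 / 16) * k₂ * k₃ * k₄)
    (hc₇ : c₇ = -(3 / 8) * k₁ * k₂ * k₃ - (1 / 8) * k₁ * k₂ * k₄
      + (1 / 8) * k₁ * k₃ * k₄ + (3 / 8) * k₂ * k₃ * k₄)
    (u₁ u₂ u₃ u₄ : ℝ → ℝ)
    (hu₁ : u₁ = fun x => -x ^ 2 / (2 * k₁) + C * x / (K * k₁))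
    (hu₂ : u₂ = fun x => -x ^ 2 / (2 * k₂) + C * x / (K * k₂) + c₃ / (K * k₂))
    (hu₃ : u₃ = fun x => -x ^ 2 / (2 * k₃) + C * x / (K * k₃) + c₅ / (K * k₃))
    (hu₄ : u₄ = fun x => -x ^ 2 / (2 * k₄) + C * x / (K * k₄) + c₇ / (K * k₄)) :
    u₁ 0 = 0 ∧ u₄ 1 = 0 ∧
    u₁ (1 / 4) = u₂ (1 / 4) ∧ u₂ (1 / 2) = u₃ (1 / 2) ∧ u₃ (3 / 4) = u₄ (3 / 4) ∧
    k₁ * deriv u₁ (1 / 4) = k₂ * deriv u₂ (1 / 4) ∧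
    k₂ * deriv u₂ (1 / 2) = k₃ * deriv u₃ (1 / 2) ∧
    k₃ * deriv u₃ (3 / 4) = k₄ * deriv u₄ (3 / 4) ∧
    (∀ x : ℝ, -k₁ * deriv (deriv u₁) x = 1) ∧
    (∀ x : ℝ, -k₂ * deriv (deriv u₂) x = 1) ∧
    (∀ x : ℝ, -k₃ * deriv (deriv u₃) x = 1) ∧
    (∀ x : ℝ, -k₄ * deriv (deriv u₄) x = 1) := by
  have h1 : k₁ ≠ 0 := hk₁.ne'
  have h2 : k₂ ≠ 0 := hk₂.ne'
  have h3 : k₃ ≠ 0 := hk₃.ne'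
  have h4 : k₄ ≠ 0 := hk₄.ne'
  have hKpos : 0 < K := by
    rw [hK]; positivity
  have hK0 : K ≠ 0 := hKpos.ne'
  have e₁ : u₁ = fun x : ℝ => (-(2 * k₁)⁻¹) * x ^ 2 + (C / (K * k₁)) * x + 0 := by
    rw [hu₁]; funext x; field_simp; ring
  have e₂ : u₂ = fun x : ℝ => (-(2 * k₂)⁻¹) * x ^ 2 + (C / (K * k₂)) * x + c₃ / (K * k₂) := by
    rw [hu₂]; funext x; field_simp
  have e₃ : u₃ = fun x : ℝ => (-(2 * k₃)⁻¹) * x ^ 2 + (C / (K * k₃)) * x + c₅ / (K * k₃) := by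
    rw [hu₃]; funext x; field_simp
  have e₄ : u₄ = fun x : ℝ => (-(2 * k₄)⁻¹) * x ^ 2 + (C / (K * k₄)) * x + c₇ / (K * k₄) := by
    rw [hu₄]; funext x; field_simp
  refine ⟨?_, ?_, ?_, ?_, ?_, ?_, ?_, ?_, ?_, ?_, ?_, ?_⟩
  · rw [hu₁]; simp
  · rw [hu₄]; field_simp; subst hK hC hc₇; ring
  · rw [hu₁, hu₂]; field_simp; subst hK hC hc₃; ring
  · rw [hu₂, hu₃]; field_simp; subst hK hC hc₃ hc₅; ring
  · rw [hu₃, hu₄]; field_simp; subst hK hC hc₅ hc₇; ring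
  · rw [e₁, e₂, deriv_quad, deriv_quad]; field_simp
  · rw [e₂, e₃, deriv_quad, deriv_quad]; field_simp
  · rw [e₃, e₄, deriv_quad, deriv_quad]; field_simp
  · intro x; rw [e₁, deriv2_quad]; field_simp
  · intro x; rw [e₂, deriv2_quad]; field_simp
  · intro x; rw [e₃, deriv2_quad]; field_simp
  · intro x; rw [e₄, deriv2_quad]; field_simp
end
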